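/- For k₂ > 0 and w ≥ 0, the function ū(r) = sin((√k₂/2)·r·(r + 2w)) / √(r + w), defined for r > 0, satisfies the ODE ū'' + q̄·ū = 0 with q̄(r) = −3/(4·(r + w)²) + k₂·(r + w)², and its first positive zero is r = −w + √(w² + 2π/√k₂). -/

import Mathlib

section Aux

variable (a w : ℝ)

private lemma model_hasDerivAt_aux (s : ℝ) (hsw : 0 < s + w) :
    HasDerivAt (fun s : ℝ => Real.sin (a / 2 * s * (s + 2 * w)) / Real.sqrt (s + w))
      (a * Real.sqrt (s + w) * Real.cos (a / 2 * s * (s + 2 * w))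
        - Real.sin (a / 2 * s * (s + 2 * w)) / (2 * (s + w) * Real.sqrt (s + w))) s := by
  have hS : Real.sqrt (s + w) ≠ 0 := ne_of_gt (Real.sqrt_pos.mpr hsw)
  have hS2 : Real.sqrt (s + w) ^ 2 = s + w := Real.sq_sqrt hsw.le
  have hφ : HasDerivAt (fun s : ℝ => a / 2 * s * (s + 2 * w)) (a * (s + w)) s := by
    have h1 : HasDerivAt (fun s : ℝ => (a / 2 * s) * (s + 2 * w))
        ((a / 2 * 1) * (s + 2 * w) + (a / 2 * s) * 1) s :=
      ((hasDerivAt_id s).const_mul (a / 2)).mul ((hasDerivAt_id s).add_const (2 * w))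
    convert h1 using 1
    ring
  have hsin : HasDerivAt (fun s : ℝ => Real.sin (a / 2 * s * (s + 2 * w)))
      (Real.cos (a / 2 * s * (s + 2 * w)) * (a * (s + w))) s :=
    (Real.hasDerivAt_sin _).comp s hφ
  have hsqrt : HasDerivAt (fun s : ℝ => Real.sqrt (s + w))
      (1 / (2 * Real.sqrt (s + w)) * 1) s :=
    (Real.hasDerivAt_sqrt (ne_of_gt hsw)).comp s ((hasDerivAt_id s).add_const w)
  have hdiv := hsin.div hsqrt hS
  refine hdiv.congr_deriv ?_
  set S := Real.sqrt (s + w) with hSdef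
  set c := Real.cos (a / 2 * s * (s + 2 * w))
  set si := Real.sin (a / 2 * s * (s + 2 * w))
  rw [← hS2]
  field_simp

private lemma model_hasDerivAt_aux2 (k₂ : ℝ) (hk : a ^ 2 = k₂) (s : ℝ) (hsw : 0 < s + w) :
    ∃ V, HasDerivAt (fun s : ℝ => a * Real.sqrt (s + w) * Real.cos (a / 2 * s * (s + 2 * w))
        - Real.sin (a / 2 * s * (s + 2 * w)) / (2 * (s + w) * Real.sqrt (s + w))) V s ∧
      V + (-3 / (4 * (s + w) ^ 2) + k₂ * (s + w) ^ 2) *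
          (Real.sin (a / 2 * s * (s + 2 * w)) / Real.sqrt (s + w)) = 0 := by
  have hSpos : 0 < Real.sqrt (s + w) := Real.sqrt_pos.mpr hsw
  have hS : Real.sqrt (s + w) ≠ 0 := ne_of_gt hSpos
  have hS2 : Real.sqrt (s + w) ^ 2 = s + w := Real.sq_sqrt hsw.le
  have hφ : HasDerivAt (fun s : ℝ => a / 2 * s * (s + 2 * w)) (a * (s + w)) s := by
    have h1 : HasDerivAt (fun s : ℝ => (a / 2 * s) * (s + 2 * w))
        ((a / 2 * 1) * (s + 2 * w) + (a / 2 * s) * 1) s :=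
      ((hasDerivAt_id s).const_mul (a / 2)).mul ((hasDerivAt_id s).add_const (2 * w))
    convert h1 using 1
    ring
  have hsin : HasDerivAt (fun s : ℝ => Real.sin (a / 2 * s * (s + 2 * w)))
      (Real.cos (a / 2 * s * (s + 2 * w)) * (a * (s + w))) s :=
    (Real.hasDerivAt_sin _).comp s hφ
  have hcos : HasDerivAt (fun s : ℝ => Real.cos (a / 2 * s * (s + 2 * w)))
      (-Real.sin (a / 2 * s * (s + 2 * w)) * (a * (s + w))) s :=
    (Real.hasDerivAt_cos _).comp s hφ
  have hsqrt : HasDerivAt (fun s : ℝ => Real.sqrt (s + w))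
      (1 / (2 * Real.sqrt (s + w)) * 1) s :=
    (Real.hasDerivAt_sqrt (ne_of_gt hsw)).comp s ((hasDerivAt_id s).add_const w)
  have h1 := (hsqrt.const_mul a).mul hcos
  have hden : HasDerivAt (fun s : ℝ => 2 * (s + w) * Real.sqrt (s + w))
      ((2 * 1) * Real.sqrt (s + w) + (2 * (s + w)) * (1 / (2 * Real.sqrt (s + w)) * 1)) s :=
    (((hasDerivAt_id s).add_const w).const_mul 2).mul hsqrt
  have hdne : 2 * (s + w) * Real.sqrt (s + w) ≠ 0 := by positivity
  have h2 := hsin.div hden hdne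
  refine ⟨_, h1.sub h2, ?_⟩
  set S := Real.sqrt (s + w) with hSdef
  set c := Real.cos (a / 2 * s * (s + 2 * w))
  set si := Real.sin (a / 2 * s * (s + 2 * w))
  rw [← hk, ← hS2]
  field_simp
  ring

end Aux

/-- The model function `ū(r) = sin((√k₂/2) r (r + 2w)) / √(r + w)` solves
`ū'' + q̄ ū = 0` with `q̄(r) = -3/(4 (r+w)²) + k₂ (r+w)²`, and its first positive zero
is `-w + √(w² + 2π/√k₂)`. -/
theorem model_solution_k2 (k₂ w : ℝ) (hk₂ : 0 < k₂) (hw : 0 ≤ w) :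
    (∀ r : ℝ, 0 < r →
      deriv (deriv (fun s : ℝ =>
          Real.sin (Real.sqrt k₂ / 2 * s * (s + 2 * w)) / Real.sqrt (s + w))) r +
        (-3 / (4 * (r + w) ^ 2) + k₂ * (r + w) ^ 2) *
          (Real.sin (Real.sqrt k₂ / 2 * r * (r + 2 * w)) / Real.sqrt (r + w)) = 0) ∧
    sInf {r : ℝ | 0 < r ∧
        Real.sin (Real.sqrt k₂ / 2 * r * (r + 2 * w)) / Real.sqrt (r + w) = 0} =
      -w + Real.sqrt (w ^ 2 + 2 * Real.pi / Real.sqrt k₂) := by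
  set a := Real.sqrt k₂ with hadef
  have ha : 0 < a := Real.sqrt_pos.mpr hk₂
  have hak : a ^ 2 = k₂ := Real.sq_sqrt hk₂.le
  constructor
  · -- the ODE
    intro r hr
    have hrw : 0 < r + w := by linarith
    set g : ℝ → ℝ := fun s =>
      a * Real.sqrt (s + w) * Real.cos (a / 2 * s * (s + 2 * w))
        - Real.sin (a / 2 * s * (s + 2 * w)) / (2 * (s + w) * Real.sqrt (s + w)) with hgdef
    have hEq : Set.EqOn (deriv (fun s : ℝ =>
        Real.sin (a / 2 * s * (s + 2 * w)) / Real.sqrt (s + w))) g (Set.Ioi 0) := by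
      intro s hs
      exact (model_hasDerivAt_aux a w s (by have : (0:ℝ) < s := hs; linarith)).deriv
    have hev : deriv (fun s : ℝ =>
        Real.sin (a / 2 * s * (s + 2 * w)) / Real.sqrt (s + w)) =ᶠ[nhds r] g :=
      Filter.eventuallyEq_of_mem (isOpen_Ioi.mem_nhds hr) hEq
    obtain ⟨V, hV, hV0⟩ := model_hasDerivAt_aux2 a w k₂ hak r hrw
    rw [hev.deriv_eq, hV.deriv]
    exact hV0
  · -- the first positive zero
    set r₀ : ℝ := -w + Real.sqrt (w ^ 2 + 2 * Real.pi / a) with hr₀def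
    have hbase : 0 ≤ w ^ 2 + 2 * Real.pi / a := by positivity
    have hr₀w : r₀ + w = Real.sqrt (w ^ 2 + 2 * Real.pi / a) := by rw [hr₀def]; ring
    have hsq : (r₀ + w) ^ 2 = w ^ 2 + 2 * Real.pi / a := by
      rw [hr₀w]; exact Real.sq_sqrt hbase
    have hr₀pos : 0 < r₀ := by
      have h1 : Real.sqrt (w ^ 2) < Real.sqrt (w ^ 2 + 2 * Real.pi / a) := by
        apply Real.sqrt_lt_sqrt (by positivity)
        have : 0 < 2 * Real.pi / a := by positivity
        linarith
      rw [Real.sqrt_sq hw] at h1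
      rw [hr₀def]; linarith
    have harg : a / 2 * r₀ * (r₀ + 2 * w) = Real.pi := by
      have h2 : r₀ * (r₀ + 2 * w) = 2 * Real.pi / a := by linear_combination hsq
      have h3 : a / 2 * r₀ * (r₀ + 2 * w) = a / 2 * (r₀ * (r₀ + 2 * w)) := by ring
      rw [h3, h2]
      field_simp
    apply IsLeast.csInf_eq
    constructor
    · refine ⟨hr₀pos, ?_⟩
      rw [harg, Real.sin_pi, zero_div]
    · rintro r ⟨hr, hz⟩
      have hrw : 0 < r + w := by linarith
      have hS : Real.sqrt (r + w) ≠ 0 := ne_of_gt (Real.sqrt_pos.mpr hrw)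
      have hsin : Real.sin (a / 2 * r * (r + 2 * w)) = 0 := by
        rcases div_eq_zero_iff.mp hz with h | h
        · exact h
        · exact absurd h hS
      obtain ⟨n, hn⟩ := Real.sin_eq_zero_iff.mp hsin
      have hxpos : 0 < a / 2 * r * (r + 2 * w) :=
        mul_pos (mul_pos (by positivity) hr) (by linarith)
      have hnpos : 0 < (n : ℝ) := by nlinarith [Real.pi_pos]
      have hn1 : (1 : ℝ) ≤ (n : ℝ) := by
        have : (0 : ℤ) < n := by exact_mod_cast hnpos
        exact_mod_cast this
      have hπle : Real.pi ≤ a / 2 * r * (r + 2 * w) := by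
        nlinarith [Real.pi_pos]
      have h5 : 2 * Real.pi / a ≤ r * (r + 2 * w) := by
        rw [div_le_iff₀ ha]; nlinarith
      have h3 : w ^ 2 + 2 * Real.pi / a ≤ (r + w) ^ 2 := by nlinarith
      have h4 : Real.sqrt (w ^ 2 + 2 * Real.pi / a) ≤ r + w := by
        have := Real.sqrt_le_sqrt h3
        rwa [Real.sqrt_sq hrw.le] at this
      rw [hr₀def]; linarith
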